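/- Consider the process in which S₁ ~ θ on 𝒮, the demand X₁, X₂, … is i.i.d. ~ P_X and independent of S₁, at each time t the output Y_t is drawn (conditionally independently of the past given W_t) according to the structured policy b(· | W_t) where W_t = S_t − X_t, and S_{t+1} = S_t + Y_t − X_t. Then for every horizon T the outputs Y₁, …, Y_T are mutually independent and each Y_t has marginal pmf P_X; i.e., the output process is statistically indistinguishable from the demand process. -/
import Mathlib


open Finset
open scoped Classical

namespace SmartMeter

/-! ### Basic information measures for finitely supported distributions.
All entropies and mutual informations are in bits (base-2 logarithms). -/

/-- Probability that the random variable `Z` takes the value `z` under the pmf `p`. -/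
noncomputable def pr {Ω α : Type*} [Fintype Ω] [DecidableEq α]
    (p : Ω → ℝ) (Z : Ω → α) (z : α) : ℝ :=
  ∑ ω ∈ Finset.univ.filter (fun ω => Z ω = z), p ω

/-- Shannon entropy (in bits) of the random variable `Z` under the pmf `p`. -/
noncomputable def ent {Ω α : Type*} [Fintype Ω] [DecidableEq α]
    (p : Ω → ℝ) (Z : Ω → α) : ℝ :=
  -∑ z ∈ Finset.univ.image Z, pr p Z z * Real.logb 2 (pr p Z z)

/-- Mutual information `I(A; B)`. -/
noncomputable def mutInfo {Ω α β : Type*} [Fintype Ω] [DecidableEq α] [DecidableEq β]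
    (p : Ω → ℝ) (A : Ω → α) (B : Ω → β) : ℝ :=
  ent p A + ent p B - ent p (fun ω => (A ω, B ω))

/-- Conditional entropy `H(A | C)`. -/
noncomputable def condEnt {Ω α γ : Type*} [Fintype Ω] [DecidableEq α] [DecidableEq γ]
    (p : Ω → ℝ) (A : Ω → α) (C : Ω → γ) : ℝ :=
  ent p (fun ω => (A ω, C ω)) - ent p C

/-- Conditional mutual information `I(A; B | C)`. -/
noncomputable def condMutInfo {Ω α β γ : Type*} [Fintype Ω] [DecidableEq α] [DecidableEq β]
    [DecidableEq γ] (p : Ω → ℝ) (A : Ω → α) (B : Ω → β) (C : Ω → γ) : ℝ :=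
  ent p (fun ω => (A ω, C ω)) + ent p (fun ω => (B ω, C ω))
    - ent p (fun ω => (A ω, B ω, C ω)) - ent p C

/-- `p` is a probability mass function on the finite type `Ω`. -/
def IsPMF {Ω : Type*} [Fintype Ω] (p : Ω → ℝ) : Prop :=
  (∀ ω, 0 ≤ p ω) ∧ ∑ ω, p ω = 1

/-- Extension of a pmf on `{0, …, n}` to an integer-indexed function (zero out of range). -/
noncomputable def extZ {n : ℕ} (f : Fin (n + 1) → ℝ) (k : ℤ) : ℝ :=
  if h : 0 ≤ k ∧ k ≤ (n : ℤ) then f ⟨k.toNat, by omega⟩ else 0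

/-! ### The single-letter quantity `J*` -/

/-- `I(S - X; X)` for independent `X ~ PX` on `{0,…,mx}` and `S ~ θ` on `{0,…,ms}`. -/
noncomputable def iidMI (mx ms : ℕ) (PX : Fin (mx + 1) → ℝ) (θ : Fin (ms + 1) → ℝ) : ℝ :=
  mutInfo (fun ω : Fin (mx + 1) × Fin (ms + 1) => PX ω.1 * θ ω.2)
    (fun ω => ((ω.2 : ℕ) : ℤ) - ((ω.1 : ℕ) : ℤ)) (fun ω => ω.1)

/-- `J* = min over pmfs θ on 𝒮 of I(S - X; X)`. -/
noncomputable def Jstar (mx ms : ℕ) (PX : Fin (mx + 1) → ℝ) : ℝ :=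
  sInf {r : ℝ | ∃ θ : Fin (ms + 1) → ℝ, IsPMF θ ∧ iidMI mx ms PX θ = r}

/-! ### The structured policy `b*` -/

/-- `ξ(w) = Σ_{(x,s) : s - x = w} PX(x) θ(s)`, the pmf of `W = S - X`. -/
noncomputable def xiOf (mx ms : ℕ) (PX : Fin (mx + 1) → ℝ) (θ : Fin (ms + 1) → ℝ)
    (w : ℤ) : ℝ :=
  ∑ x : Fin (mx + 1), ∑ s : Fin (ms + 1),
    if ((s : ℕ) : ℤ) - ((x : ℕ) : ℤ) = w then PX x * θ s else 0

/-- The structured policy with respect to `(θ, ξ)`: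
`b(y|w) = PX(y) θ(y + w) / ξ(w)` for `y ∈ 𝒳 ∩ 𝒴₀(w)` (when `ξ(w) > 0`), else `0`. -/
noncomputable def bstar (mx my ms : ℕ) (PX : Fin (mx + 1) → ℝ) (θ : Fin (ms + 1) → ℝ)
    (w : ℤ) (y : Fin (my + 1)) : ℝ :=
  if xiOf mx ms PX θ w = 0 then 0
  else extZ PX ((y : ℕ) : ℤ) * extZ θ (((y : ℕ) : ℤ) + w) / xiOf mx ms PX θ w

/-! ### Trajectory spaces, policies and induced joint laws.
Time is indexed from `0`; `ω = (s₁, x, y)` records the initial battery state `S₁ = ω.1`,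
the demands `X_{t+1} = ω.2.1 t` and the outputs `Y_{t+1} = ω.2.2 t` for `t = 0, …, T-1`. -/

/-- Trajectories of horizon `T`. -/
abbrev Traj (mx my ms T : ℕ) :=
  Fin (ms + 1) × (Fin T → Fin (mx + 1)) × (Fin T → Fin (my + 1))

variable {mx my ms T : ℕ}

/-- Demand at (0-based) time `t`, as an integer (junk value `0` for `t ≥ T`). -/
def Xat (ω : Traj mx my ms T) (t : ℕ) : ℤ :=
  if h : t < T then ((ω.2.1 ⟨t, h⟩ : ℕ) : ℤ) else 0

/-- Output at (0-based) time `t`, as an integer (junk value `0` for `t ≥ T`). -/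
def Yat (ω : Traj mx my ms T) (t : ℕ) : ℤ :=
  if h : t < T then ((ω.2.2 ⟨t, h⟩ : ℕ) : ℤ) else 0

/-- Battery state at (0-based) time `t`: `S_{t+1} = S_t + Y_t - X_t`, `Sat ω 0 = S₁`. -/
def Sat (ω : Traj mx my ms T) (t : ℕ) : ℤ :=
  ((ω.1 : ℕ) : ℤ) + ∑ i ∈ Finset.range t, (Yat ω i - Xat ω i)

/-- `W_t = S_t - X_t`. -/
def Wat (ω : Traj mx my ms T) (t : ℕ) : ℤ := Sat ω t - Xat ω t

/-- A general causal (class `Q_A`) randomized battery policy: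
`q_t(y_t | x^t, s^t, y^{t-1})`; since `s^t` is determined by `(s₁, x^{t-1}, y^{t-1})`,
the policy is a function of `(x^t, s₁, y^{t-1})`. -/
def PolicyA (mx my ms : ℕ) : Type :=
  (t : ℕ) → (Fin (t + 1) → Fin (mx + 1)) → Fin (ms + 1) → (Fin t → Fin (my + 1)) →
    Fin (my + 1) → ℝ

/-- A class-`Q_B` policy: `q_t(y_t | x_t, s_t, y^{t-1})`. -/
def PolicyB (mx my ms : ℕ) : Type :=
  (t : ℕ) → Fin (mx + 1) → ℤ → (Fin t → Fin (my + 1)) → Fin (my + 1) → ℝ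

/-- The battery state `S_t` computed from `s₁` and the history `(x^t, y^{t-1})`. -/
def hstate {t : ℕ} (s1 : Fin (ms + 1)) (x : Fin (t + 1) → Fin (mx + 1))
    (y : Fin t → Fin (my + 1)) : ℤ :=
  ((s1 : ℕ) : ℤ) + ∑ i : Fin t, (((y i : ℕ) : ℤ) - ((x i.castSucc : ℕ) : ℤ))

/-- Each `q_t(· | x^t, s^t, y^{t-1})` is a pmf on `𝒴`. -/
def CondPMFA (q : PolicyA mx my ms) : Prop :=
  ∀ (t : ℕ) (x : Fin (t + 1) → Fin (mx + 1)) (s1 : Fin (ms + 1)) (y : Fin t → Fin (my + 1)),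
    (∀ yt, 0 ≤ q t x s1 y yt) ∧ ∑ yt, q t x s1 y yt = 1

/-- Feasibility of a class-`Q_A` policy: conditional pmfs supported on
`𝒴₀(s_t - x_t) = {y ∈ 𝒴 : s_t - x_t + y ∈ 𝒮}`. -/
def FeasibleA (q : PolicyA mx my ms) : Prop :=
  CondPMFA q ∧
  ∀ (t : ℕ) (x : Fin (t + 1) → Fin (mx + 1)) (s1 : Fin (ms + 1)) (y : Fin t → Fin (my + 1)),
    ∀ yt, q t x s1 y yt ≠ 0 →
      0 ≤ hstate s1 x y - ((x (Fin.last t) : ℕ) : ℤ) + ((yt : ℕ) : ℤ) ∧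
      hstate s1 x y - ((x (Fin.last t) : ℕ) : ℤ) + ((yt : ℕ) : ℤ) ≤ (ms : ℤ)

/-- Each `q_t(· | x_t, s_t, y^{t-1})` is a pmf on `𝒴`. -/
def CondPMFB (q : PolicyB mx my ms) : Prop :=
  ∀ (t : ℕ) (xt : Fin (mx + 1)) (s : ℤ) (y : Fin t → Fin (my + 1)),
    (∀ yt, 0 ≤ q t xt s y yt) ∧ ∑ yt, q t xt s y yt = 1

/-- Feasibility of a class-`Q_B` policy. -/
def FeasibleB (q : PolicyB mx my ms) : Prop :=
  CondPMFB q ∧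
  ∀ (t : ℕ) (xt : Fin (mx + 1)) (s : ℤ) (y : Fin t → Fin (my + 1)),
    0 ≤ s → s ≤ (ms : ℤ) →
    ∀ yt, q t xt s y yt ≠ 0 →
      0 ≤ s - ((xt : ℕ) : ℤ) + ((yt : ℕ) : ℤ) ∧
      s - ((xt : ℕ) : ℤ) + ((yt : ℕ) : ℤ) ≤ (ms : ℤ)

/-- The demand prefix `x^t = (x_0, …, x_t)` of a trajectory. -/
def prefX (ω : Traj mx my ms T) (t : Fin T) : Fin ((t : ℕ) + 1) → Fin (mx + 1) :=
  fun i => ω.2.1 ⟨(i : ℕ), lt_of_le_of_lt (Nat.lt_succ_iff.mp i.isLt) t.isLt⟩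

/-- The output prefix `y^{t-1} = (y_0, …, y_{t-1})` of a trajectory. -/
def prefY (ω : Traj mx my ms T) (t : Fin T) : Fin (t : ℕ) → Fin (my + 1) :=
  fun i => ω.2.2 ⟨(i : ℕ), i.isLt.trans t.isLt⟩

/-- Joint law on trajectories induced by i.i.d. demand `PX`, initial battery pmf `PS1`
(independent of the demand), and a class-`Q_A` policy `q`. -/
noncomputable def jointA (PS1 : Fin (ms + 1) → ℝ) (PX : Fin (mx + 1) → ℝ)
    (q : PolicyA mx my ms) (T : ℕ) (ω : Traj mx my ms T) : ℝ :=
  PS1 ω.1 * ∏ t : Fin T,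
    (PX (ω.2.1 t) * q (t : ℕ) (prefX ω t) ω.1 (prefY ω t) (ω.2.2 t))

/-- Weight of a demand trajectory under a Markov chain `(PX1, Qm)`. -/
noncomputable def markovWt (PX1 : Fin (mx + 1) → ℝ) (Qm : Fin (mx + 1) → Fin (mx + 1) → ℝ)
    {T : ℕ} (x : Fin T → Fin (mx + 1)) : ℝ :=
  ∏ t : Fin T,
    if _h : (t : ℕ) = 0 then PX1 (x t)
    else Qm (x ⟨(t : ℕ) - 1, lt_of_le_of_lt (Nat.sub_le _ _) t.isLt⟩) (x t)

/-- Joint law on trajectories induced by Markov demand and a class-`Q_A` policy. -/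
noncomputable def jointAMarkov (PS1 : Fin (ms + 1) → ℝ) (PX1 : Fin (mx + 1) → ℝ)
    (Qm : Fin (mx + 1) → Fin (mx + 1) → ℝ) (q : PolicyA mx my ms) (T : ℕ)
    (ω : Traj mx my ms T) : ℝ :=
  PS1 ω.1 * markovWt PX1 Qm ω.2.1 *
    ∏ t : Fin T, q (t : ℕ) (prefX ω t) ω.1 (prefY ω t) (ω.2.2 t)

/-- Joint law on trajectories induced by Markov demand and a class-`Q_B` policy. -/
noncomputable def jointBMarkov (PS1 : Fin (ms + 1) → ℝ) (PX1 : Fin (mx + 1) → ℝ)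
    (Qm : Fin (mx + 1) → Fin (mx + 1) → ℝ) (q : PolicyB mx my ms) (T : ℕ)
    (ω : Traj mx my ms T) : ℝ :=
  PS1 ω.1 * markovWt PX1 Qm ω.2.1 *
    ∏ t : Fin T, q (t : ℕ) (ω.2.1 t) (Sat ω (t : ℕ)) (prefY ω t) (ω.2.2 t)

/-- The memoryless time-invariant policy `q_t(y | x, s) = b*(y | s - x)`, as a member of the
class of general causal policies. -/
noncomputable def structuredPolicyA (mx my ms : ℕ) (PX : Fin (mx + 1) → ℝ)
    (θ : Fin (ms + 1) → ℝ) : PolicyA mx my ms :=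
  fun t x s1 y yt => bstar mx my ms PX θ (hstate s1 x y - ((x (Fin.last t) : ℕ) : ℤ)) yt



/-! ### Auxiliary lemmas for Statement 11 -/

lemma extZ_eq_sum {n : ℕ} (f : Fin (n+1) → ℝ) (s : ℤ) :
    extZ f s = ∑ k : Fin (n+1), if ((k:ℕ):ℤ) = s then f k else 0 := by
  by_cases h : 0 ≤ s ∧ s ≤ (n:ℤ)
  · rw [extZ, dif_pos h, Finset.sum_eq_single (⟨s.toNat, by omega⟩ : Fin (n+1))]
    · rw [if_pos (by simp; omega)]
    · intro k _ hk
      rw [if_neg]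
      intro hks
      exact hk (Fin.ext (by simp at hks ⊢; omega))
    · simp
  · rw [extZ, dif_neg h]
    refine (Finset.sum_eq_zero fun k _ => ?_).symm
    rw [if_neg]
    intro hk
    have := k.isLt
    omega

lemma extZ_nonneg {n : ℕ} {f : Fin (n+1) → ℝ} (hf : ∀ i, 0 ≤ f i) (s : ℤ) :
    0 ≤ extZ f s := by
  unfold extZ; split
  · exact hf _
  · exact le_refl 0

lemma xiOf_eq' {mx ms : ℕ} (PX : Fin (mx+1) → ℝ) (θ : Fin (ms+1) → ℝ) (w : ℤ) :
    xiOf mx ms PX θ w = ∑ x : Fin (mx+1), PX x * extZ θ (w + ((x:ℕ):ℤ)) := by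
  unfold xiOf
  refine Finset.sum_congr rfl fun x _ => ?_
  rw [extZ_eq_sum, Finset.mul_sum]
  refine Finset.sum_congr rfl fun s _ => ?_
  rw [mul_ite, mul_zero]
  exact if_congr (by constructor <;> (intro h; omega)) rfl rfl

lemma bstar_mul_xi {mx my ms : ℕ} {PX : Fin (mx+1) → ℝ} {θ : Fin (ms+1) → ℝ}
    (hPX : ∀ i, 0 ≤ PX i) (hθ : ∀ i, 0 ≤ θ i) (w : ℤ) (y : Fin (my+1)) :
    bstar mx my ms PX θ w y * xiOf mx ms PX θ w
      = extZ PX ((y:ℕ):ℤ) * extZ θ (((y:ℕ):ℤ) + w) := by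
  by_cases hxi : xiOf mx ms PX θ w = 0
  · rw [bstar, if_pos hxi, zero_mul]
    by_cases hy : 0 ≤ ((y:ℕ):ℤ) ∧ ((y:ℕ):ℤ) ≤ (mx:ℤ)
    · set x0 : Fin (mx+1) := ⟨(y:ℕ), by omega⟩ with hx0
      have h0 : PX x0 * extZ θ (w + ((x0:ℕ):ℤ)) = 0 := by
        rw [xiOf_eq'] at hxi
        exact (Finset.sum_eq_zero_iff_of_nonneg
          (fun x _ => mul_nonneg (hPX x) (extZ_nonneg hθ _))).mp hxi x0 (Finset.mem_univ _)
      have h1 : extZ PX ((y:ℕ):ℤ) = PX x0 := by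
        rw [extZ, dif_pos hy]; congr 1
      have h2 : ((x0:ℕ):ℤ) = ((y:ℕ):ℤ) := by simp [hx0]
      rw [h1, ← h0, h2]
      ring
    · rw [extZ, dif_neg hy, zero_mul]
  · rw [bstar, if_neg hxi, div_mul_cancel₀ _ hxi]

lemma snoc_lt {α : Type*} {n : ℕ} (x' : Fin n → α) (xT : α) (j : Fin (n+1)) (h : (j:ℕ) < n) :
    (Fin.snoc x' xT : Fin (n+1) → α) j = x' ⟨(j:ℕ), h⟩ := by
  simp only [Fin.snoc, h, dif_pos]
  rfl

lemma jointA_snoc {mx my ms : ℕ} (PS1 : Fin (ms+1) → ℝ) (PX : Fin (mx+1) → ℝ)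
    (q : PolicyA mx my ms) (n : ℕ) (s1 : Fin (ms+1)) (x' : Fin n → Fin (mx+1))
    (xT : Fin (mx+1)) (y : Fin (n+1) → Fin (my+1)) :
    jointA PS1 PX q (n+1) (s1, Fin.snoc x' xT, y)
      = jointA PS1 PX q n (s1, x', y ∘ Fin.castSucc)
        * (PX xT * q n (Fin.snoc x' xT) s1 (y ∘ Fin.castSucc) (y (Fin.last n))) := by
  have key : ∀ t : Fin n,
      PX ((Fin.snoc x' xT : Fin (n+1) → Fin (mx+1)) t.castSucc) *
        q ((t.castSucc : Fin (n+1)) : ℕ)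
          (prefX ((s1, Fin.snoc x' xT, y) : Traj mx my ms (n+1)) t.castSucc) s1
          (prefY ((s1, Fin.snoc x' xT, y) : Traj mx my ms (n+1)) t.castSucc) (y t.castSucc)
      = PX (x' t) *
        q ((t : Fin n) : ℕ)
          (prefX ((s1, x', y ∘ Fin.castSucc) : Traj mx my ms n) t) s1
          (prefY ((s1, x', y ∘ Fin.castSucc) : Traj mx my ms n) t) ((y ∘ Fin.castSucc) t) := by
    intro t
    have h1 : (Fin.snoc x' xT : Fin (n+1) → Fin (mx+1)) t.castSucc = x' t := Fin.snoc_castSucc ..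
    have h2 : prefX ((s1, Fin.snoc x' xT, y) : Traj mx my ms (n+1)) t.castSucc
        = prefX ((s1, x', y ∘ Fin.castSucc) : Traj mx my ms n) t := by
      funext i
      simp only [prefX]
      have hi : (i:ℕ) < n :=
        lt_of_le_of_lt (Nat.lt_succ_iff.mp i.isLt : (i:ℕ) ≤ (t:ℕ)) t.isLt
      exact snoc_lt (n := n) x' xT _ hi
    have h3 : prefY ((s1, Fin.snoc x' xT, y) : Traj mx my ms (n+1)) t.castSucc
        = prefY ((s1, x', y ∘ Fin.castSucc) : Traj mx my ms n) t := rfl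
    rw [h1, h2, h3]
    rfl
  unfold jointA
  rw [Fin.prod_univ_castSucc]
  dsimp only
  rw [Finset.prod_congr rfl fun t _ => key t]
  have h4 : (Fin.snoc x' xT : Fin (n+1) → Fin (mx+1)) (Fin.last n) = xT := Fin.snoc_last ..
  have h5 : prefX ((s1, Fin.snoc x' xT, y) : Traj mx my ms (n+1)) (Fin.last n)
      = Fin.snoc x' xT := rfl
  have h6 : prefY ((s1, Fin.snoc x' xT, y) : Traj mx my ms (n+1)) (Fin.last n)
      = y ∘ Fin.castSucc := rfl
  rw [h4, h5, h6]
  simp only [Fin.val_last]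
  ring

/-- The fiberwise prefix sum used in the induction for Statement 11. -/
noncomputable def Gfun (mx my ms : ℕ) (PX : Fin (mx+1) → ℝ) (θ : Fin (ms+1) → ℝ)
    (n : ℕ) (y : Fin n → Fin (my+1)) (s : ℤ) : ℝ :=
  ∑ s1 : Fin (ms+1), ∑ x : Fin n → Fin (mx+1),
    if ((s1:ℕ):ℤ) + (∑ i : Fin n, (((y i : ℕ):ℤ) - ((x i : ℕ):ℤ))) = s
    then jointA θ PX (structuredPolicyA mx my ms PX θ) n (s1, x, y) else 0

lemma Gfun_eq {mx my ms : ℕ} (PX : Fin (mx+1) → ℝ) (θ : Fin (ms+1) → ℝ)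
    (hPX : ∀ i, 0 ≤ PX i) (hθ : ∀ i, 0 ≤ θ i) :
    ∀ (n : ℕ) (y : Fin n → Fin (my+1)) (s : ℤ),
      Gfun mx my ms PX θ n y s
        = (∏ t : Fin n, extZ PX ((y t : ℕ) : ℤ)) * extZ θ s := by
  intro n
  induction n with
  | zero =>
    intro y s
    rw [extZ_eq_sum θ s]
    unfold Gfun jointA
    simp
  | succ n ih =>
    intro y s
    set yL : Fin (my+1) := y (Fin.last n) with hyL
    set w : ℤ := s - ((yL:ℕ):ℤ) with hw
    have hterm : ∀ (s1 : Fin (ms+1)) (xT : Fin (mx+1)) (x' : Fin n → Fin (mx+1)),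
        (if ((s1:ℕ):ℤ) + (∑ i : Fin (n+1), (((y i : ℕ):ℤ) - (((Fin.snoc x' xT : Fin (n+1) → Fin (mx+1)) i : ℕ):ℤ))) = s
         then jointA θ PX (structuredPolicyA mx my ms PX θ) (n+1) (s1, Fin.snoc x' xT, y)
         else 0)
        = PX xT * bstar mx my ms PX θ w yL *
          (if ((s1:ℕ):ℤ) + (∑ i : Fin n, ((((y ∘ Fin.castSucc) i : ℕ):ℤ) - ((x' i : ℕ):ℤ)))
              = w + ((xT:ℕ):ℤ)
           then jointA θ PX (structuredPolicyA mx my ms PX θ) n (s1, x', y ∘ Fin.castSucc)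
           else 0) := by
      intro s1 xT x'
      have hsum : ∑ i : Fin (n+1), (((y i : ℕ):ℤ) - (((Fin.snoc x' xT : Fin (n+1) → Fin (mx+1)) i : ℕ):ℤ))
          = (∑ i : Fin n, ((((y ∘ Fin.castSucc) i : ℕ):ℤ) - ((x' i : ℕ):ℤ)))
            + (((yL:ℕ):ℤ) - ((xT:ℕ):ℤ)) := by
        rw [Fin.sum_univ_castSucc]
        congr 1
        · refine Finset.sum_congr rfl fun i _ => ?_
          rw [Fin.snoc_castSucc]
          rfl
        · rw [Fin.snoc_last, hyL]
      by_cases hc : ((s1:ℕ):ℤ) + (∑ i : Fin n, ((((y ∘ Fin.castSucc) i : ℕ):ℤ) - ((x' i : ℕ):ℤ)))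
          = w + ((xT:ℕ):ℤ)
      · rw [if_pos hc, if_pos (by rw [hsum]; omega)]
        rw [jointA_snoc]
        have hq : structuredPolicyA mx my ms PX θ n (Fin.snoc x' xT) s1 (y ∘ Fin.castSucc)
              (y (Fin.last n))
            = bstar mx my ms PX θ w yL := by
          unfold structuredPolicyA
          rw [← hyL]
          congr 1
          rw [Fin.snoc_last]
          unfold hstate
          have hss : ∑ i : Fin n,
                ((((y ∘ Fin.castSucc) i : ℕ):ℤ) - (((Fin.snoc x' xT : Fin (n+1) → Fin (mx+1)) i.castSucc : ℕ):ℤ))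
              = ∑ i : Fin n, ((((y ∘ Fin.castSucc) i : ℕ):ℤ) - ((x' i : ℕ):ℤ)) :=
            Finset.sum_congr rfl fun i _ => by rw [Fin.snoc_castSucc]
          rw [hss]
          omega
        rw [hq]
        ring
      · rw [if_neg hc, if_neg (by rw [hsum]; omega), mul_zero]
    have hre : Gfun mx my ms PX θ (n+1) y s
        = ∑ xT : Fin (mx+1), (PX xT * bstar mx my ms PX θ w yL) *
            Gfun mx my ms PX θ n (y ∘ Fin.castSucc) (w + ((xT:ℕ):ℤ)) := by
      unfold Gfun
      have h1 : ∀ s1 : Fin (ms+1),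
          (∑ x : Fin (n+1) → Fin (mx+1),
            if ((s1:ℕ):ℤ) + (∑ i : Fin (n+1), (((y i : ℕ):ℤ) - ((x i : ℕ):ℤ))) = s
            then jointA θ PX (structuredPolicyA mx my ms PX θ) (n+1) (s1, x, y) else 0)
          = ∑ xT : Fin (mx+1), ∑ x' : Fin n → Fin (mx+1),
              (if ((s1:ℕ):ℤ) + (∑ i : Fin (n+1), (((y i : ℕ):ℤ)
                    - (((Fin.snoc x' xT : Fin (n+1) → Fin (mx+1)) i : ℕ):ℤ))) = s
               then jointA θ PX (structuredPolicyA mx my ms PX θ) (n+1) (s1, Fin.snoc x' xT, y)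
               else 0) := by
        intro s1
        rw [← Equiv.sum_comp (Fin.snocEquiv (fun _ : Fin (n+1) => Fin (mx+1))),
          Fintype.sum_prod_type]
        rfl
      rw [Finset.sum_congr rfl fun s1 _ => h1 s1, Finset.sum_comm]
      refine Finset.sum_congr rfl fun xT _ => ?_
      rw [Finset.mul_sum]
      refine Finset.sum_congr rfl fun s1 _ => ?_
      rw [Finset.mul_sum]
      refine Finset.sum_congr rfl fun x' _ => ?_
      rw [hterm s1 xT x']
    rw [hre]
    simp only [ih]
    have step1 : ∑ xT : Fin (mx+1), (PX xT * bstar mx my ms PX θ w yL) *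
          ((∏ t : Fin n, extZ PX (((y ∘ Fin.castSucc) t : ℕ):ℤ)) * extZ θ (w + ((xT:ℕ):ℤ)))
        = (bstar mx my ms PX θ w yL * xiOf mx ms PX θ w) *
          (∏ t : Fin n, extZ PX (((y ∘ Fin.castSucc) t : ℕ):ℤ)) := by
      rw [xiOf_eq', Finset.mul_sum, Finset.sum_mul]
      refine Finset.sum_congr rfl fun xT _ => ?_
      ring
    rw [step1, bstar_mul_xi hPX hθ]
    rw [show ((yL:ℕ):ℤ) + w = s from by omega]
    rw [Fin.prod_univ_castSucc, hyL]
    simp only [Function.comp_apply]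
    ring

lemma sum_extZ_Icc {ms : ℕ} (θ : Fin (ms+1) → ℝ) (hθ : ∑ k, θ k = 1)
    (a b : ℤ) (ha : a ≤ 0) (hb : (ms:ℤ) ≤ b) :
    ∑ s ∈ Finset.Icc a b, extZ θ s = 1 := by
  rw [Finset.sum_congr rfl (fun s _ => extZ_eq_sum θ s), Finset.sum_comm]
  rw [← hθ]
  refine Finset.sum_congr rfl fun k _ => ?_
  rw [Finset.sum_ite_eq, if_pos]
  rw [Finset.mem_Icc]
  have := k.isLt
  omega

lemma sum_jointA {mx my ms : ℕ} (PX : Fin (mx+1) → ℝ) (θ : Fin (ms+1) → ℝ)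
    (hPX : IsPMF PX) (hθ : IsPMF θ) (n : ℕ) (y : Fin n → Fin (my+1)) :
    ∑ s1 : Fin (ms+1), ∑ x : Fin n → Fin (mx+1),
        jointA θ PX (structuredPolicyA mx my ms PX θ) n (s1, x, y)
      = ∏ t : Fin n, extZ PX ((y t : ℕ):ℤ) := by
  classical
  set I : Finset ℤ := Finset.Icc (-((n:ℤ) * mx)) ((ms:ℤ) + n * my) with hI
  have hnm : (0:ℤ) ≤ (n:ℤ) * mx := by positivity
  have hnm' : (0:ℤ) ≤ (n:ℤ) * my := by positivity
  have hmem : ∀ (s1 : Fin (ms+1)) (x : Fin n → Fin (mx+1)),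
      ((s1:ℕ):ℤ) + (∑ i : Fin n, (((y i : ℕ):ℤ) - ((x i : ℕ):ℤ))) ∈ I := by
    intro s1 x
    have h1 : ∑ i : Fin n, (-(mx:ℤ)) ≤ ∑ i : Fin n, (((y i : ℕ):ℤ) - ((x i : ℕ):ℤ)) :=
      Finset.sum_le_sum fun i _ => by
        have hx := (x i).isLt
        have hy := (y i).isLt
        omega
    have h2 : ∑ i : Fin n, (((y i : ℕ):ℤ) - ((x i : ℕ):ℤ)) ≤ ∑ i : Fin n, (my:ℤ) :=
      Finset.sum_le_sum fun i _ => by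
        have hx := (x i).isLt
        have hy := (y i).isLt
        omega
    rw [Finset.sum_const, Finset.card_univ, Fintype.card_fin, nsmul_eq_mul, mul_neg] at h1
    rw [Finset.sum_const, Finset.card_univ, Fintype.card_fin, nsmul_eq_mul] at h2
    have h3 := s1.isLt
    simp only [hI, Finset.mem_Icc]
    omega
  have hsplit : ∀ (s1 : Fin (ms+1)) (x : Fin n → Fin (mx+1)),
      jointA θ PX (structuredPolicyA mx my ms PX θ) n (s1, x, y)
        = ∑ s ∈ I, if ((s1:ℕ):ℤ) + (∑ i : Fin n, (((y i : ℕ):ℤ) - ((x i : ℕ):ℤ))) = s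
            then jointA θ PX (structuredPolicyA mx my ms PX θ) n (s1, x, y) else 0 := by
    intro s1 x
    rw [Finset.sum_ite_eq, if_pos (hmem s1 x)]
  calc ∑ s1 : Fin (ms+1), ∑ x : Fin n → Fin (mx+1),
        jointA θ PX (structuredPolicyA mx my ms PX θ) n (s1, x, y)
      = ∑ s1 : Fin (ms+1), ∑ x : Fin n → Fin (mx+1), ∑ s ∈ I,
          (if ((s1:ℕ):ℤ) + (∑ i : Fin n, (((y i : ℕ):ℤ) - ((x i : ℕ):ℤ))) = s
           then jointA θ PX (structuredPolicyA mx my ms PX θ) n (s1, x, y) else 0) :=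
        Finset.sum_congr rfl fun s1 _ => Finset.sum_congr rfl fun x _ => hsplit s1 x
    _ = ∑ s ∈ I, Gfun mx my ms PX θ n y s := by
        unfold Gfun
        rw [Finset.sum_congr rfl fun s1 (_ : s1 ∈ Finset.univ) => Finset.sum_comm,
          Finset.sum_comm]
    _ = ∑ s ∈ I, (∏ t : Fin n, extZ PX ((y t : ℕ):ℤ)) * extZ θ s :=
        Finset.sum_congr rfl fun s _ => Gfun_eq PX θ hPX.1 hθ.1 n y s
    _ = (∏ t : Fin n, extZ PX ((y t : ℕ):ℤ)) * ∑ s ∈ I, extZ θ s := by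
        rw [Finset.mul_sum]
    _ = ∏ t : Fin n, extZ PX ((y t : ℕ):ℤ) := by
        rw [sum_extZ_Icc θ hθ.2 _ _ (by omega) (by omega), mul_one]

lemma sum_extZ_my {mx my : ℕ} (hxy : mx ≤ my) (PX : Fin (mx+1) → ℝ)
    (hPX : ∑ k, PX k = 1) :
    ∑ z : Fin (my+1), extZ PX ((z:ℕ):ℤ) = 1 := by
  rw [Finset.sum_congr rfl (fun z _ => extZ_eq_sum PX _), Finset.sum_comm, ← hPX]
  refine Finset.sum_congr rfl fun k _ => ?_
  rw [Finset.sum_eq_single (⟨(k:ℕ), by omega⟩ : Fin (my+1))]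
  · rw [if_pos (by simp)]
  · intro z _ hz
    rw [if_neg]
    intro hkz
    exact hz (Fin.ext (by simp at hkz ⊢; omega))
  · simp

/-- For the process with `S₁ ~ θ`, i.i.d. demand `~ PX` independent of
`S₁`, outputs drawn according to the structured policy `b*(· | W_t)`, and dynamics
`S_{t+1} = S_t + Y_t - X_t`: for every horizon `T`, the outputs `Y₁, …, Y_T` are mutually
independent (their joint pmf is the product of the marginals) and each `Y_t` has marginal
pmf `P_X`; i.e. the output process is statistically indistinguishable from the demand. -/
theorem structured_policy_output_iid (mx my ms : ℕ) (hxy : mx ≤ my)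
    (PX : Fin (mx + 1) → ℝ) (hPX : IsPMF PX)
    (θ : Fin (ms + 1) → ℝ) (hθ : IsPMF θ) (T : ℕ) :
    let p := jointA (mx := mx) (my := my) (ms := ms) θ PX
      (structuredPolicyA mx my ms PX θ) T
    (∀ y : Fin T → Fin (my + 1),
        pr p (fun ω => ω.2.2) y = ∏ t : Fin T, extZ PX ((y t : ℕ) : ℤ)) ∧
    (∀ (t : Fin T) (yv : Fin (my + 1)),
        pr p (fun ω => ω.2.2 t) yv = extZ PX ((yv : ℕ) : ℤ)) := by
  intro p
  have hsum1 : ∀ y : Fin T → Fin (my + 1),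
      pr p (fun ω => ω.2.2) y = ∏ t : Fin T, extZ PX ((y t : ℕ) : ℤ) := by
    intro y
    have h1 : pr p (fun ω => ω.2.2) y
        = ∑ s1 : Fin (ms+1), ∑ x : Fin T → Fin (mx+1), p (s1, x, y) := by
      rw [pr, Finset.sum_filter, Fintype.sum_prod_type]
      refine Finset.sum_congr rfl fun s1 _ => ?_
      rw [Fintype.sum_prod_type]
      refine Finset.sum_congr rfl fun x _ => ?_
      simp
    rw [h1]
    exact sum_jointA PX θ hPX hθ T y
  refine ⟨hsum1, ?_⟩
  intro t yv
  have h2 : pr p (fun ω => ω.2.2 t) yv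
      = ∑ yy : Fin T → Fin (my+1),
          if yy t = yv then ∏ i : Fin T, extZ PX ((yy i : ℕ):ℤ) else 0 := by
    rw [pr, Finset.sum_filter, Fintype.sum_prod_type]
    rw [Finset.sum_congr rfl fun s1 (_ : s1 ∈ Finset.univ) =>
      (Fintype.sum_prod_type _).trans Finset.sum_comm]
    rw [Finset.sum_comm]
    refine Finset.sum_congr rfl fun yy _ => ?_
    by_cases h : yy t = yv
    · rw [if_pos h]
      rw [show (∏ i : Fin T, extZ PX ((yy i : ℕ):ℤ))
            = ∑ s1 : Fin (ms+1), ∑ x : Fin T → Fin (mx+1), p (s1, x, yy) from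
          (sum_jointA PX θ hPX hθ T yy).symm]
      refine Finset.sum_congr rfl fun s1 _ => Finset.sum_congr rfl fun x _ => ?_
      exact if_pos h
    · rw [if_neg h]
      exact Finset.sum_eq_zero fun s1 _ => Finset.sum_eq_zero fun x _ => if_neg h
  rw [h2]
  set g : Fin T → Fin (my+1) → ℝ := fun i z =>
    if i = t then (if z = yv then extZ PX ((z:ℕ):ℤ) else 0) else extZ PX ((z:ℕ):ℤ) with hg
  have claimA : ∀ yy : Fin T → Fin (my+1),
      (if yy t = yv then ∏ i : Fin T, extZ PX ((yy i : ℕ):ℤ) else 0)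
        = ∏ i : Fin T, g i (yy i) := by
    intro yy
    by_cases h : yy t = yv
    · rw [if_pos h]
      refine Finset.prod_congr rfl fun i _ => ?_
      by_cases hi : i = t
      · subst hi; simp [hg, h]
      · simp [hg, hi]
    · rw [if_neg h]
      refine (Finset.prod_eq_zero (Finset.mem_univ t) ?_).symm
      simp [hg, h]
  rw [Finset.sum_congr rfl fun yy _ => claimA yy]
  rw [← Fintype.piFinset_univ, ← Finset.prod_univ_sum]
  have hfac : ∀ i : Fin T, (∑ z : Fin (my+1), g i z)
      = if i = t then extZ PX ((yv:ℕ):ℤ) else 1 := by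
    intro i
    by_cases hi : i = t
    · subst hi
      simp only [hg, if_pos rfl]
      rw [Finset.sum_ite_eq' Finset.univ yv, if_pos (Finset.mem_univ _)]
      simp
    · simp only [hg, if_neg hi]
      exact sum_extZ_my hxy PX hPX.2
  rw [Finset.prod_congr rfl fun i _ => hfac i]
  rw [Finset.prod_ite_eq' Finset.univ t (fun _ => extZ PX ((yv:ℕ):ℤ)),
    if_pos (Finset.mem_univ _)]
end SmartMeter
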